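/- Convergence of federated EM for identity-covariance Gaussian mixtures (Theorem 1): Start from any μ^(0)_1,…,μ^(0)_M ∈ ℝ^d and, for each client c, any strictly positive probability vector π^(0)_c on {1,…,M}. For t ≥ 1 define the iterates: (E-step) q^(t)_{c,i}(m) = π^(t−1)_c(m)·N(x_{c,i}; μ^(t−1)_m, I) / Σ_{m'=1}^M π^(t−1)_c(m')·N(x_{c,i}; μ^(t−1)_{m'}, I) for every c, i, m; (M-step) π^(t)_c(m) = (1/N_c)·Σ_{i=1}^{N_c} q^(t)_{c,i}(m) and μ^(t)_m = (Σ_{c=1}^C Σ_{i=1}^{N_c} q^(t)_{c,i}(m)·x_{c,i}) / (Σ_{c=1}^C Σ_{i=1}^{N_c} q^(t)_{c,i}(m)) (all denominators are strictly positive). Then, writing F^(t) = F(μ^(t)_{1:M}, π^(t)_{1:C}), the sequence F^(t) is nondecreasing in t, and for every T ≥ 1, (1/T)·Σ_{t=1}^T |F^(t) − F^(t−1)| ≤ (F* − F^(0))/T, where F* = −(d/2)·log(2π)·Σ_{c=1}^C N_c; in particular the time-averaged successive differences of the log-likelihood are O(T^{−1}). -/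

import Mathlib

open Finset RealInnerProductSpace

/-- Identity-covariance Gaussian density on `ℝ^d`:
`N(x; μ, I) = (2π)^(-d/2) · exp(-‖x-μ‖²/2)`. -/
noncomputable def gaussI (d : ℕ) (x μ : EuclideanSpace ℝ (Fin d)) : ℝ :=
  (2 * Real.pi) ^ (-(d : ℝ) / 2) * Real.exp (-‖x - μ‖ ^ 2 / 2)

lemma gaussI_pos (d : ℕ) (x μ : EuclideanSpace ℝ (Fin d)) : 0 < gaussI d x μ :=
  mul_pos (Real.rpow_pos_of_pos (by positivity) _) (Real.exp_pos _)

lemma gaussI_le (d : ℕ) (x μ : EuclideanSpace ℝ (Fin d)) :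
    gaussI d x μ ≤ (2 * Real.pi) ^ (-(d : ℝ) / 2) := by
  have h : (0:ℝ) < (2 * Real.pi) ^ (-(d : ℝ) / 2) := Real.rpow_pos_of_pos (by positivity) _
  have h2 : Real.exp (-‖x - μ‖ ^ 2 / 2) ≤ 1 := Real.exp_le_one_iff.mpr (by nlinarith [sq_nonneg ‖x - μ‖])
  calc gaussI d x μ ≤ (2 * Real.pi) ^ (-(d : ℝ) / 2) * 1 :=
        mul_le_mul_of_nonneg_left h2 h.le
    _ = _ := mul_one _

lemma log_gaussI (d : ℕ) (x μ : EuclideanSpace ℝ (Fin d)) :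
    Real.log (gaussI d x μ)
      = -((d : ℝ) / 2) * Real.log (2 * Real.pi) - ‖x - μ‖ ^ 2 / 2 := by
  rw [gaussI, Real.log_mul (by positivity) (Real.exp_ne_zero _),
    Real.log_rpow (by positivity), Real.log_exp]
  ring

lemma gibbs_le {M : ℕ} (hM : 1 ≤ M) (qv a : Fin M → ℝ) (hq0 : ∀ m, 0 ≤ qv m)
    (hq1 : ∑ m, qv m = 1) (ha : ∀ m, 0 < a m) :
    ∑ m, qv m * (Real.log (a m) - Real.log (qv m)) ≤ Real.log (∑ m, a m) := by
  have : Nonempty (Fin M) := Fin.pos_iff_nonempty.mp hM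
  have hS : 0 < ∑ m, a m := Finset.sum_pos (fun m _ => ha m) Finset.univ_nonempty
  have key : ∀ m, qv m * (Real.log (a m) - Real.log (qv m))
      ≤ a m / (∑ m', a m') + qv m * Real.log (∑ m', a m') - qv m := by
    intro m
    rcases eq_or_lt_of_le (hq0 m) with h | h
    · rw [← h]; simpa using div_nonneg (ha m).le hS.le
    · have h1 : (0:ℝ) < a m / ((∑ m', a m') * qv m) := div_pos (ha m) (mul_pos hS h)
      have h2 := Real.log_le_sub_one_of_pos h1
      rw [Real.log_div (ne_of_gt (ha m)) (ne_of_gt (mul_pos hS h)),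
        Real.log_mul (ne_of_gt hS) (ne_of_gt h)] at h2
      have h3 := mul_le_mul_of_nonneg_left h2 h.le
      have h4 : qv m * (a m / ((∑ m', a m') * qv m) - 1)
          = a m / (∑ m', a m') - qv m := by field_simp
      nlinarith [h3]
  calc ∑ m, qv m * (Real.log (a m) - Real.log (qv m))
      ≤ ∑ m, (a m / (∑ m', a m') + qv m * Real.log (∑ m', a m') - qv m) :=
        Finset.sum_le_sum (fun m _ => key m)
    _ = Real.log (∑ m, a m) := by
        rw [Finset.sum_sub_distrib, Finset.sum_add_distrib, ← Finset.sum_div,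
          ← Finset.sum_mul, hq1, div_self (ne_of_gt hS)]
        ring

lemma gibbs_eq {M : ℕ} (a : Fin M → ℝ) (ha : ∀ m, 0 < a m)
    (hS : 0 < ∑ m', a m') :
    ∑ m, (a m / ∑ m', a m') * (Real.log (a m) - Real.log (a m / ∑ m', a m'))
      = Real.log (∑ m', a m') := by
  have h : ∀ m, Real.log (a m) - Real.log (a m / ∑ m', a m')
      = Real.log (∑ m', a m') := by
    intro m
    rw [Real.log_div (ne_of_gt (ha m)) (ne_of_gt hS)]
    ring
  simp only [h]
  rw [← Finset.sum_mul, ← Finset.sum_div, div_self (ne_of_gt hS), one_mul]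

lemma weight_log_le {M : ℕ} (w p : Fin M → ℝ) {W : ℝ} (hw : ∀ m, 0 ≤ w m)
    (hWsum : ∑ m, w m = W) (hW : 0 < W) (hp : ∀ m, 0 < p m)
    (hp1 : ∑ m, p m = 1) :
    ∑ m, w m * Real.log (p m) ≤ ∑ m, w m * Real.log (w m / W) := by
  have key : ∀ m, w m * Real.log (p m) - w m * Real.log (w m / W)
      ≤ p m * W - w m := by
    intro m
    rcases eq_or_lt_of_le (hw m) with h | h
    · rw [← h]; simpa using mul_nonneg (hp m).le hW.le
    · have h1 : (0:ℝ) < p m * W / w m := div_pos (mul_pos (hp m) hW) h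
      have h2 := Real.log_le_sub_one_of_pos h1
      rw [Real.log_div (ne_of_gt (mul_pos (hp m) hW)) (ne_of_gt h),
        Real.log_mul (ne_of_gt (hp m)) (ne_of_gt hW)] at h2
      have h3 := mul_le_mul_of_nonneg_left h2 h.le
      have h4 : w m * (p m * W / w m - 1) = p m * W - w m := by field_simp
      have h5 : Real.log (w m / W) = Real.log (w m) - Real.log W :=
        Real.log_div (ne_of_gt h) (ne_of_gt hW)
      nlinarith [h3]
  have hsum : ∑ m, (w m * Real.log (p m) - w m * Real.log (w m / W)) ≤ 0 := by
    calc ∑ m, (w m * Real.log (p m) - w m * Real.log (w m / W))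
        ≤ ∑ m, (p m * W - w m) := Finset.sum_le_sum (fun m _ => key m)
      _ = 0 := by rw [Finset.sum_sub_distrib, ← Finset.sum_mul, hp1, one_mul,
          hWsum, sub_self]
  rw [Finset.sum_sub_distrib] at hsum
  linarith

lemma wmean_min {E ι : Type*} [NormedAddCommGroup E] [InnerProductSpace ℝ E]
    [Fintype ι] (w : ι → ℝ) (y : ι → E) (hw : ∀ j, 0 ≤ w j)
    (hW : 0 < ∑ j, w j) (z : E) :
    ∑ j, w j * ‖y j - (∑ j, w j)⁻¹ • ∑ j, w j • y j‖ ^ 2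
      ≤ ∑ j, w j * ‖y j - z‖ ^ 2 := by
  set W : ℝ := ∑ j, w j with hWdef
  set b : E := W⁻¹ • ∑ j, w j • y j with hb
  have hsum : ∑ j, w j • (y j - b) = 0 := by
    rw [Finset.sum_congr rfl (fun j _ => smul_sub (w j) (y j) b),
      Finset.sum_sub_distrib, ← Finset.sum_smul, hb, smul_smul,
      mul_inv_cancel₀ (ne_of_gt hW), one_smul, sub_self]
  have heq : ∑ j, w j * ‖y j - z‖ ^ 2
      = ∑ j, w j * ‖y j - b‖ ^ 2 + W * ‖b - z‖ ^ 2 := by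
    have expand : ∀ j, w j * ‖y j - z‖ ^ 2
        = w j * ‖y j - b‖ ^ 2 + 2 * (inner ℝ (w j • (y j - b)) (b - z) : ℝ)
          + w j * ‖b - z‖ ^ 2 := by
      intro j
      rw [show y j - z = (y j - b) + (b - z) by abel, norm_add_sq_real,
        real_inner_smul_left]
      ring
    calc ∑ j, w j * ‖y j - z‖ ^ 2
        = ∑ j, (w j * ‖y j - b‖ ^ 2 + 2 * (inner ℝ (w j • (y j - b)) (b - z) : ℝ)
            + w j * ‖b - z‖ ^ 2) := Finset.sum_congr rfl (fun j _ => expand j)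
      _ = ∑ j, w j * ‖y j - b‖ ^ 2
            + 2 * (inner ℝ (∑ j, w j • (y j - b)) (b - z) : ℝ) + W * ‖b - z‖ ^ 2 := by
          rw [Finset.sum_add_distrib, Finset.sum_add_distrib, ← Finset.mul_sum,
            ← sum_inner, ← Finset.sum_mul]
      _ = ∑ j, w j * ‖y j - b‖ ^ 2 + W * ‖b - z‖ ^ 2 := by
          rw [hsum, inner_zero_left]; ring
  have : 0 ≤ W * ‖b - z‖ ^ 2 := mul_nonneg hW.le (by positivity)
  linarith

/-- Log-likelihood of the identity-covariance Gaussian mixture across all clients: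
`F(μ_{1:M}, π_{1:C}) = Σ_c Σ_i log(Σ_m π_c(m) N(x_{c,i}; μ_m, I))`. -/
noncomputable def logLik (d C M : ℕ) (N : Fin C → ℕ)
    (x : (c : Fin C) → Fin (N c) → EuclideanSpace ℝ (Fin d))
    (μ : Fin M → EuclideanSpace ℝ (Fin d))
    (π : Fin C → Fin M → ℝ) : ℝ :=
  ∑ c, ∑ i, Real.log (∑ m, π c m * gaussI d (x c i) (μ m))

/-- The EM surrogate function
`G(μ_{1:M}, π_{1:C}; q) = Σ_c Σ_i Σ_m q_{c,i}(m)·[log π_c(m) − (d/2)·log(2π)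
  − ‖x_{c,i} − μ_m‖²/2 − log q_{c,i}(m)]`. -/
noncomputable def surrogate (d C M : ℕ) (N : Fin C → ℕ)
    (x : (c : Fin C) → Fin (N c) → EuclideanSpace ℝ (Fin d))
    (μ : Fin M → EuclideanSpace ℝ (Fin d))
    (π : Fin C → Fin M → ℝ)
    (q : (c : Fin C) → Fin (N c) → Fin M → ℝ) : ℝ :=
  ∑ c, ∑ i, ∑ m, q c i m *
    (Real.log (π c m) - (d : ℝ) / 2 * Real.log (2 * Real.pi)
      - ‖x c i - μ m‖ ^ 2 / 2 - Real.log (q c i m))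

/-- Theorem 1: convergence of federated EM for identity-covariance Gaussian mixtures.
The log-likelihood iterates are nondecreasing, and the time-averaged successive
differences are bounded by `(F* − F⁽⁰⁾)/T = O(T⁻¹)`, where
`F* = −(d/2)·log(2π)·Σ_c N_c`. -/
theorem federated_em_gmm_convergence
    (d C M : ℕ) (hC : 1 ≤ C) (hM : 1 ≤ M)
    (N : Fin C → ℕ) (hN : ∀ c, 1 ≤ N c)
    (x : (c : Fin C) → Fin (N c) → EuclideanSpace ℝ (Fin d))
    (μ : ℕ → Fin M → EuclideanSpace ℝ (Fin d))
    (π : ℕ → Fin C → Fin M → ℝ)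
    (q : ℕ → (c : Fin C) → Fin (N c) → Fin M → ℝ)
    -- initialization: strictly positive probability vectors
    (hπ0pos : ∀ c m, 0 < π 0 c m) (hπ0sum : ∀ c, ∑ m, π 0 c m = 1)
    -- E-step at every t ≥ 1
    (hq : ∀ t, 1 ≤ t → ∀ c i m, q t c i m
      = π (t - 1) c m * gaussI d (x c i) (μ (t - 1) m)
          / ∑ m', π (t - 1) c m' * gaussI d (x c i) (μ (t - 1) m'))
    -- M-step at every t ≥ 1
    (hπ : ∀ t, 1 ≤ t → ∀ c m, π t c m = ((N c : ℝ))⁻¹ * ∑ i, q t c i m)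
    (hμ : ∀ t, 1 ≤ t → ∀ m, μ t m
      = (∑ c, ∑ i, q t c i m)⁻¹ • ∑ c, ∑ i, q t c i m • x c i)
    (hden : ∀ t, 1 ≤ t → ∀ m, 0 < ∑ c, ∑ i, q t c i m) :
    Monotone (fun t => logLik d C M N x (μ t) (π t))
    ∧ ∀ T : ℕ, 1 ≤ T →
        (1 / (T : ℝ)) * ∑ t ∈ Finset.Icc 1 T,
            |logLik d C M N x (μ t) (π t) - logLik d C M N x (μ (t - 1)) (π (t - 1))|
          ≤ (-((d : ℝ) / 2) * Real.log (2 * Real.pi) * (∑ c, (N c : ℝ))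
              - logLik d C M N x (μ 0) (π 0)) / (T : ℝ) := by
  have hMne : Nonempty (Fin M) := Fin.pos_iff_nonempty.mp hM
  have hNne : ∀ c, Nonempty (Fin (N c)) := fun c => Fin.pos_iff_nonempty.mp (hN c)
  -- q-properties at t+1 given π-properties at t
  have qfacts : ∀ t, ((∀ c m, 0 < π t c m) ∧ (∀ c, ∑ m, π t c m = 1)) →
      (∀ c i m, 0 < q (t + 1) c i m) ∧ (∀ c i, ∑ m, q (t + 1) c i m = 1) := by
    intro t ih
    have hq' : ∀ c i m, q (t + 1) c i m
        = π t c m * gaussI d (x c i) (μ t m)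
          / ∑ m', π t c m' * gaussI d (x c i) (μ t m') := by
      intro c i m
      simpa using hq (t + 1) (Nat.le_add_left 1 t) c i m
    have hApos : ∀ c i m, 0 < π t c m * gaussI d (x c i) (μ t m) :=
      fun c i m => mul_pos (ih.1 c m) (gaussI_pos d _ _)
    have hSpos : ∀ c i, 0 < ∑ m', π t c m' * gaussI d (x c i) (μ t m') :=
      fun c i => Finset.sum_pos (fun m _ => hApos c i m) Finset.univ_nonempty
    refine ⟨fun c i m => ?_, fun c i => ?_⟩
    · rw [hq' c i m]; exact div_pos (hApos c i m) (hSpos c i)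
    · rw [Finset.sum_congr rfl (fun m _ => hq' c i m), ← Finset.sum_div,
        div_self (ne_of_gt (hSpos c i))]
  -- positivity invariant for π
  have inv : ∀ t, (∀ c m, 0 < π t c m) ∧ (∀ c, ∑ m, π t c m = 1) := by
    intro t
    induction t with
    | zero => exact ⟨hπ0pos, hπ0sum⟩
    | succ t ih =>
      obtain ⟨hqpos, hqsum⟩ := qfacts t ih
      constructor
      · intro c m
        rw [hπ (t + 1) (Nat.le_add_left 1 t) c m]
        exact mul_pos (inv_pos.mpr (by exact_mod_cast hN c))
          (Finset.sum_pos (fun i _ => hqpos c i m) Finset.univ_nonempty)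
      · intro c
        rw [Finset.sum_congr rfl (fun m _ => hπ (t + 1) (Nat.le_add_left 1 t) c m),
          ← Finset.mul_sum, Finset.sum_comm,
          Finset.sum_congr rfl (fun i _ => hqsum c i)]
        have hNc : (0:ℝ) < (N c : ℝ) := by exact_mod_cast hN c
        simp [Finset.sum_const, inv_mul_cancel₀ (ne_of_gt hNc)]
  -- one EM step increases the log-likelihood
  have step : ∀ t, logLik d C M N x (μ t) (π t) ≤ logLik d C M N x (μ (t+1)) (π (t+1)) := by
    intro t
    obtain ⟨hπpos, hπsum⟩ := inv t
    obtain ⟨hπpos', hπsum'⟩ := inv (t + 1)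
    obtain ⟨hqpos, hqsum⟩ := qfacts t (inv t)
    have hq' : ∀ c i m, q (t + 1) c i m
        = π t c m * gaussI d (x c i) (μ t m)
          / ∑ m', π t c m' * gaussI d (x c i) (μ t m') := by
      intro c i m; simpa using hq (t + 1) (Nat.le_add_left 1 t) c i m
    have hApos : ∀ c i m, 0 < π t c m * gaussI d (x c i) (μ t m) :=
      fun c i m => mul_pos (hπpos c m) (gaussI_pos d _ _)
    have hSpos : ∀ c i, 0 < ∑ m', π t c m' * gaussI d (x c i) (μ t m') :=
      fun c i => Finset.sum_pos (fun m _ => hApos c i m) Finset.univ_nonempty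
    -- Step 1: at the E-step posterior, the surrogate equals the log-likelihood
    have step1 : logLik d C M N x (μ t) (π t)
        = ∑ c, ∑ i, ∑ m, q (t + 1) c i m *
          (Real.log (π t c m * gaussI d (x c i) (μ t m)) - Real.log (q (t + 1) c i m)) := by
      unfold logLik
      refine Finset.sum_congr rfl fun c _ => Finset.sum_congr rfl fun i _ => ?_
      rw [← gibbs_eq (fun m => π t c m * gaussI d (x c i) (μ t m)) (hApos c i) (hSpos c i)]
      exact Finset.sum_congr rfl fun m _ => by rw [hq' c i m]
    -- Step 3: the surrogate lower-bounds the log-likelihood (Jensen/Gibbs)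
    have step3 : ∑ c, ∑ i, ∑ m, q (t + 1) c i m *
        (Real.log (π (t+1) c m * gaussI d (x c i) (μ (t+1) m)) - Real.log (q (t + 1) c i m))
        ≤ logLik d C M N x (μ (t+1)) (π (t+1)) := by
      unfold logLik
      refine Finset.sum_le_sum fun c _ => Finset.sum_le_sum fun i _ => ?_
      exact gibbs_le hM (q (t+1) c i) _ (fun m => (hqpos c i m).le) (hqsum c i)
        (fun m => mul_pos (hπpos' c m) (gaussI_pos d _ _))
    -- decomposition of the surrogate main term
    have decomp : ∀ (π' : Fin C → Fin M → ℝ) (μ' : Fin M → EuclideanSpace ℝ (Fin d)),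
        (∀ c m, 0 < π' c m) →
        ∑ c, ∑ i, ∑ m, q (t + 1) c i m * Real.log (π' c m * gaussI d (x c i) (μ' m))
          = (∑ c, ∑ m, (∑ i, q (t + 1) c i m) * Real.log (π' c m))
            - (d : ℝ) / 2 * Real.log (2 * Real.pi) * (∑ c, (N c : ℝ))
            - (∑ m, ∑ c, ∑ i, q (t + 1) c i m * ‖x c i - μ' m‖ ^ 2) / 2 := by
      intro π' μ' hpos
      have hterm : ∀ c i m, q (t + 1) c i m * Real.log (π' c m * gaussI d (x c i) (μ' m))
          = q (t + 1) c i m * Real.log (π' c m)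
            - q (t + 1) c i m * ((d : ℝ) / 2 * Real.log (2 * Real.pi))
            - q (t + 1) c i m * ‖x c i - μ' m‖ ^ 2 / 2 := by
        intro c i m
        rw [Real.log_mul (ne_of_gt (hpos c m)) (ne_of_gt (gaussI_pos d _ _)), log_gaussI]
        ring
      rw [Finset.sum_congr rfl (fun c _ => Finset.sum_congr rfl (fun i _ =>
        Finset.sum_congr rfl (fun m _ => hterm c i m)))]
      simp only [Finset.sum_sub_distrib]
      congr 1
      · congr 1
        · refine Finset.sum_congr rfl fun c _ => ?_
          rw [Finset.sum_comm]
          exact Finset.sum_congr rfl fun m _ => (Finset.sum_mul _ _ _).symm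
        · have h1 : ∀ c i, ∑ m, q (t + 1) c i m * ((d : ℝ) / 2 * Real.log (2 * Real.pi))
              = (d : ℝ) / 2 * Real.log (2 * Real.pi) := by
            intro c i; rw [← Finset.sum_mul, hqsum c i, one_mul]
          rw [Finset.sum_congr rfl (fun c _ => Finset.sum_congr rfl (fun i _ => h1 c i))]
          simp only [Finset.sum_const, Finset.card_univ, Fintype.card_fin, nsmul_eq_mul]
          rw [← Finset.sum_mul, mul_comm]
      · simp only [← Finset.sum_div]
        rw [Finset.sum_congr rfl (fun c _ => Finset.sum_comm), Finset.sum_comm]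
    -- (a) the π update improves the π part
    have ha : (∑ c, ∑ m, (∑ i, q (t+1) c i m) * Real.log (π t c m))
        ≤ ∑ c, ∑ m, (∑ i, q (t+1) c i m) * Real.log (π (t+1) c m) := by
      refine Finset.sum_le_sum fun c _ => ?_
      have hWsum : ∑ m, ∑ i, q (t+1) c i m = (N c : ℝ) := by
        rw [Finset.sum_comm, Finset.sum_congr rfl (fun i _ => hqsum c i)]
        simp
      have h := weight_log_le (fun m => ∑ i, q (t+1) c i m) (π t c)
        (fun m => Finset.sum_nonneg fun i _ => (hqpos c i m).le) hWsum
        (by exact_mod_cast hN c) (hπpos c) (hπsum c)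
      refine h.trans_eq ?_
      refine Finset.sum_congr rfl fun m _ => ?_
      rw [hπ (t+1) (Nat.le_add_left 1 t) c m, inv_mul_eq_div]
    -- (b) the μ update improves the quadratic part
    have hb : (∑ m, ∑ c, ∑ i, q (t+1) c i m * ‖x c i - μ (t+1) m‖ ^ 2)
        ≤ ∑ m, ∑ c, ∑ i, q (t+1) c i m * ‖x c i - μ t m‖ ^ 2 := by
      refine Finset.sum_le_sum fun m _ => ?_
      have key : ∀ (g : EuclideanSpace ℝ (Fin d)),
          ∑ c, ∑ i, q (t+1) c i m * ‖x c i - g‖ ^ 2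
            = ∑ j : Σ c, Fin (N c), q (t+1) j.1 j.2 m * ‖x j.1 j.2 - g‖ ^ 2 := by
        intro g; rw [← Finset.univ_sigma_univ, Finset.sum_sigma]
      have keyw : ∑ c, ∑ i, q (t+1) c i m
          = ∑ j : Σ c, Fin (N c), q (t+1) j.1 j.2 m := by
        rw [← Finset.univ_sigma_univ, Finset.sum_sigma]
      have keyx : (∑ c, ∑ i, q (t+1) c i m • x c i)
          = ∑ j : Σ c, Fin (N c), q (t+1) j.1 j.2 m • x j.1 j.2 := by
        rw [← Finset.univ_sigma_univ, Finset.sum_sigma]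
      have hW : 0 < ∑ j : Σ c, Fin (N c), q (t+1) j.1 j.2 m := by
        rw [← keyw]; exact hden (t+1) (Nat.le_add_left 1 t) m
      have hμ' : μ (t+1) m = (∑ j : Σ c, Fin (N c), q (t+1) j.1 j.2 m)⁻¹
          • ∑ j : Σ c, Fin (N c), q (t+1) j.1 j.2 m • x j.1 j.2 := by
        rw [hμ (t+1) (Nat.le_add_left 1 t) m, keyw, keyx]
      rw [key (μ (t+1) m), key (μ t m), hμ']
      exact wmean_min (fun j : Σ c, Fin (N c) => q (t+1) j.1 j.2 m)
        (fun j => x j.1 j.2) (fun j => (hqpos j.1 j.2 m).le) hW (μ t m)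
    -- Step 2: the M-step improves the surrogate
    have step2 : ∑ c, ∑ i, ∑ m, q (t + 1) c i m *
        (Real.log (π t c m * gaussI d (x c i) (μ t m)) - Real.log (q (t + 1) c i m))
        ≤ ∑ c, ∑ i, ∑ m, q (t + 1) c i m *
        (Real.log (π (t+1) c m * gaussI d (x c i) (μ (t+1) m)) - Real.log (q (t + 1) c i m)) := by
      simp only [mul_sub, Finset.sum_sub_distrib]
      have d1 := decomp (π t) (μ t) hπpos
      have d2 := decomp (π (t+1)) (μ (t+1)) hπpos'
      rw [d1, d2]
      linarith [ha, hb]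
    linarith [step1, step2, step3]
  have mono : Monotone (fun t => logLik d C M N x (μ t) (π t)) :=
    monotone_nat_of_le_succ step
  -- upper bound on the log-likelihood
  have Fbound : ∀ t, logLik d C M N x (μ t) (π t)
      ≤ -((d : ℝ) / 2) * Real.log (2 * Real.pi) * (∑ c, (N c : ℝ)) := by
    intro t
    obtain ⟨hπpos, hπsum⟩ := inv t
    have per : ∀ c i, Real.log (∑ m, π t c m * gaussI d (x c i) (μ t m))
        ≤ -((d : ℝ) / 2) * Real.log (2 * Real.pi) := by
      intro c i
      have hS : 0 < ∑ m, π t c m * gaussI d (x c i) (μ t m) :=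
        Finset.sum_pos (fun m _ => mul_pos (hπpos c m) (gaussI_pos d _ _))
          Finset.univ_nonempty
      have h1 : ∑ m, π t c m * gaussI d (x c i) (μ t m)
          ≤ (2 * Real.pi) ^ (-(d : ℝ) / 2) := by
        calc ∑ m, π t c m * gaussI d (x c i) (μ t m)
            ≤ ∑ m, π t c m * (2 * Real.pi) ^ (-(d : ℝ) / 2) :=
              Finset.sum_le_sum fun m _ =>
                mul_le_mul_of_nonneg_left (gaussI_le d _ _) (hπpos c m).le
          _ = (2 * Real.pi) ^ (-(d : ℝ) / 2) := by
              rw [← Finset.sum_mul, hπsum c, one_mul]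
      have h2 := Real.log_le_log hS h1
      rwa [Real.log_rpow (by positivity),
        show (-(d:ℝ)/2) * Real.log (2 * Real.pi)
          = -((d:ℝ)/2) * Real.log (2 * Real.pi) by ring] at h2
    calc logLik d C M N x (μ t) (π t)
        = ∑ c, ∑ i, Real.log (∑ m, π t c m * gaussI d (x c i) (μ t m)) := rfl
      _ ≤ ∑ c, ∑ i, (-((d : ℝ) / 2) * Real.log (2 * Real.pi)) :=
          Finset.sum_le_sum fun c _ => Finset.sum_le_sum fun i _ => per c i
      _ = -((d : ℝ) / 2) * Real.log (2 * Real.pi) * (∑ c, (N c : ℝ)) := by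
          simp only [Finset.sum_const, Finset.card_univ, Fintype.card_fin, nsmul_eq_mul]
          rw [← Finset.sum_mul, mul_comm]
  refine ⟨mono, ?_⟩
  intro T hT
  have hTpos : (0:ℝ) < T := by exact_mod_cast hT
  have hsum : ∑ t ∈ Finset.Icc 1 T,
      |logLik d C M N x (μ t) (π t) - logLik d C M N x (μ (t-1)) (π (t-1))|
      = logLik d C M N x (μ T) (π T) - logLik d C M N x (μ 0) (π 0) := by
    have h1 : ∀ t ∈ Finset.Icc 1 T,
        |logLik d C M N x (μ t) (π t) - logLik d C M N x (μ (t-1)) (π (t-1))|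
        = logLik d C M N x (μ t) (π t) - logLik d C M N x (μ (t-1)) (π (t-1)) := by
      intro t _
      exact abs_of_nonneg (sub_nonneg.mpr (mono (Nat.sub_le t 1)))
    rw [Finset.sum_congr rfl h1]
    have h2 : ∑ t ∈ Finset.Icc 1 T,
        (logLik d C M N x (μ t) (π t) - logLik d C M N x (μ (t-1)) (π (t-1)))
        = ∑ i ∈ Finset.range T,
          ((fun u => logLik d C M N x (μ u) (π u)) (i+1)
            - (fun u => logLik d C M N x (μ u) (π u)) i) := by
      rw [← Finset.Ico_add_one_right_eq_Icc, Finset.sum_Ico_eq_sum_range]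
      simp [add_comm]
    rw [h2, Finset.sum_range_sub (fun u => logLik d C M N x (μ u) (π u)) T]
  rw [hsum, one_div, inv_mul_eq_div]
  have := Fbound T
  gcongr
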